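/- If 0 < c < c* (so that μ = 1/(1−cM) > 0), then E₃ = ((λ²+3λμ+3μ²)/(μ²λ²)) · ∫₁^X f(z;μ,λ,−5/2) dz; and if c > c* (so that μ̃ = 1/(cM−1) > 0), then E₃ = ((λ²+3λμ̃+3μ̃²)/(μ̃²λ²)) · exp(−2λ/μ̃) · ∫₁^X f(z;μ̃,λ,−5/2) dz. -/

import Mathlib

open MeasureTheory Real

/-- P.d.f. of the normal distribution with mean `m` and variance `s2`. -/
noncomputable def normalPdf (m s2 x : ℝ) : ℝ :=
  (Real.sqrt (2 * Real.pi * s2))⁻¹ * Real.exp (-(x - m) ^ 2 / (2 * s2))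

/-- The elementary component
`E_k = ∫₀^{c(t−v)/(u+cv)} (1+x)^{−k} φ_{cM(1+x), c²D²(1+x)/(u+cv)}(x) dx`. -/
noncomputable def elemComp (u c v t M D : ℝ) (k : ℕ) : ℝ :=
  ∫ x in (0:ℝ)..(c * (t - v) / (u + c * v)),
    ((1 + x) ^ k)⁻¹ *
      normalPdf (c * M * (1 + x)) (c ^ 2 * D ^ 2 * (1 + x) / (u + c * v)) x

/-- The exponential factor `E(z; μ, λ) = exp(−λ(z−μ)²/(2μ²z))`. -/
noncomputable def gigE (z μ lam : ℝ) : ℝ :=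
  Real.exp (-(lam * (z - μ) ^ 2) / (2 * μ ^ 2 * z))

/-- Generalized inverse Gaussian density with `p = 1/2`. -/
noncomputable def gigPdfHalf (μ lam z : ℝ) : ℝ :=
  Real.sqrt lam / (μ * Real.sqrt (2 * Real.pi)) * z ^ (-(1:ℝ)/2) * gigE z μ lam

/-- Generalized inverse Gaussian density with `p = −1/2`. -/
noncomputable def gigPdfNegHalf (μ lam z : ℝ) : ℝ :=
  Real.sqrt lam / Real.sqrt (2 * Real.pi) * z ^ (-(3:ℝ)/2) * gigE z μ lam

/-- Generalized inverse Gaussian density with `p = −3/2`. -/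
noncomputable def gigPdfNeg3Half (μ lam z : ℝ) : ℝ :=
  lam ^ ((3:ℝ)/2) * μ / (Real.sqrt (2 * Real.pi) * (lam + μ)) * z ^ (-(5:ℝ)/2) * gigE z μ lam

/-- Generalized inverse Gaussian density with `p = −5/2`. -/
noncomputable def gigPdfNeg5Half (μ lam z : ℝ) : ℝ :=
  lam ^ ((5:ℝ)/2) * μ ^ 2 / (Real.sqrt (2 * Real.pi) * (lam ^ 2 + 3 * lam * μ + 3 * μ ^ 2))
    * z ^ (-(7:ℝ)/2) * gigE z μ lam


lemma rpow_neg_seven_half (z : ℝ) (hz : 0 < z) :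
    z ^ (-(7:ℝ)/2) = (z ^ 3 * Real.sqrt z)⁻¹ := by
  rw [show (-(7:ℝ)/2) = -(7/2) by norm_num, Real.rpow_neg hz.le,
    show ((7:ℝ)/2) = (3:ℕ) + (1/2:ℝ) by norm_num, Real.rpow_add hz,
    Real.rpow_natCast, ← Real.sqrt_eq_rpow]

lemma rpow_five_half (l : ℝ) (hl : 0 < l) :
    l ^ ((5:ℝ)/2) = l ^ 2 * Real.sqrt l := by
  rw [show ((5:ℝ)/2) = (2:ℕ) + (1/2:ℝ) by norm_num, Real.rpow_add hl,
    Real.rpow_natCast, ← Real.sqrt_eq_rpow]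

/-- Theorem on `E₃` in terms of the generalized inverse Gaussian c.d.f. with `p = −5/2`. -/
theorem elemComp_three_eq (u c v t M D : ℝ)
    (hu : 0 < u) (hc : 0 < c) (hv : 0 ≤ v) (ht : v < t) (hM : 0 < M) (hD : 0 < D) :
    (c < 1 / M →
      elemComp u c v t M D 3
        = (((u + c * v) / (c ^ 2 * D ^ 2)) ^ 2
              + 3 * ((u + c * v) / (c ^ 2 * D ^ 2)) * (1 / (1 - c * M))
              + 3 * (1 / (1 - c * M)) ^ 2)
              / ((1 / (1 - c * M)) ^ 2 * ((u + c * v) / (c ^ 2 * D ^ 2)) ^ 2) *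
            ∫ z in (1:ℝ)..(c * (t - v) / (u + c * v) + 1),
              gigPdfNeg5Half (1 / (1 - c * M)) ((u + c * v) / (c ^ 2 * D ^ 2)) z)
    ∧ (1 / M < c →
      elemComp u c v t M D 3
        = (((u + c * v) / (c ^ 2 * D ^ 2)) ^ 2
              + 3 * ((u + c * v) / (c ^ 2 * D ^ 2)) * (1 / (c * M - 1))
              + 3 * (1 / (c * M - 1)) ^ 2)
              / ((1 / (c * M - 1)) ^ 2 * ((u + c * v) / (c ^ 2 * D ^ 2)) ^ 2) *
            Real.exp (-2 * ((u + c * v) / (c ^ 2 * D ^ 2)) / (1 / (c * M - 1))) *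
            ∫ z in (1:ℝ)..(c * (t - v) / (u + c * v) + 1),
              gigPdfNeg5Half (1 / (c * M - 1)) ((u + c * v) / (c ^ 2 * D ^ 2)) z) := by
  have huv : 0 < u + c * v := by positivity
  have hlam : 0 < (u + c * v) / (c ^ 2 * D ^ 2) := by positivity
  set lam := (u + c * v) / (c ^ 2 * D ^ 2) with hlamdef
  have hL : 0 < c * (t - v) / (u + c * v) := by
    have : 0 < t - v := by linarith
    positivity
  constructor
  · intro hcase
    have hcm : c * M < 1 := by
      have := (lt_div_iff₀ hM).mp hcase; linarith
    have h1cm : 0 < 1 - c * M := by linarith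
    set mu := 1 / (1 - c * M) with hmudef
    have hmu : 0 < mu := by positivity
    rw [show (∫ z in (1:ℝ)..(c * (t - v) / (u + c * v) + 1), gigPdfNeg5Half mu lam z)
        = ∫ x in (0:ℝ)..(c * (t - v) / (u + c * v)), gigPdfNeg5Half mu lam (x + 1) by
      rw [intervalIntegral.integral_comp_add_right (gigPdfNeg5Half mu lam) 1, zero_add],
      ← intervalIntegral.integral_const_mul, elemComp]
    apply intervalIntegral.integral_congr
    intro x hx
    rw [Set.uIcc_of_le hL.le] at hx
    have hx0 : 0 ≤ x := hx.1
    have hz : (0:ℝ) < 1 + x := by linarith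
    simp only [gigPdfNeg5Half, gigE, normalPdf]
    rw [show x + 1 = 1 + x from add_comm x 1]
    have hexp : Real.exp (-(x - c * M * (1 + x)) ^ 2
          / (2 * (c ^ 2 * D ^ 2 * (1 + x) / (u + c * v))))
        = Real.exp (-(lam * ((1 + x) - mu) ^ 2) / (2 * mu ^ 2 * (1 + x))) := by
      congr 1
      rw [hlamdef, hmudef]
      field_simp
      ring
    rw [hexp]
    have hs : Real.sqrt (2 * Real.pi * (c ^ 2 * D ^ 2 * (1 + x) / (u + c * v)))
        = Real.sqrt (2 * Real.pi) * Real.sqrt (1 + x) / Real.sqrt lam := by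
      rw [show 2 * Real.pi * (c ^ 2 * D ^ 2 * (1 + x) / (u + c * v))
          = (2 * Real.pi * (1 + x)) / lam by rw [hlamdef]; field_simp,
        Real.sqrt_div (by positivity), Real.sqrt_mul (by positivity)]
    rw [hs, rpow_neg_seven_half _ hz, rpow_five_half _ hlam]
    have h2pi : (0:ℝ) < Real.sqrt (2 * Real.pi) := Real.sqrt_pos.mpr (by positivity)
    have hsz : (0:ℝ) < Real.sqrt (1 + x) := Real.sqrt_pos.mpr hz
    have hsl : (0:ℝ) < Real.sqrt lam := Real.sqrt_pos.mpr hlam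
    have hA : (0:ℝ) < lam ^ 2 + 3 * lam * mu + 3 * mu ^ 2 := by positivity
    field_simp
  · intro hcase
    have hcm : 1 < c * M := by
      have := (div_lt_iff₀ hM).mp hcase; linarith
    have h1cm : 0 < c * M - 1 := by linarith
    set mu := 1 / (c * M - 1) with hmudef
    have hmu : 0 < mu := by positivity
    rw [show (∫ z in (1:ℝ)..(c * (t - v) / (u + c * v) + 1), gigPdfNeg5Half mu lam z)
        = ∫ x in (0:ℝ)..(c * (t - v) / (u + c * v)), gigPdfNeg5Half mu lam (x + 1) by
      rw [intervalIntegral.integral_comp_add_right (gigPdfNeg5Half mu lam) 1, zero_add],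
      ← intervalIntegral.integral_const_mul, elemComp]
    apply intervalIntegral.integral_congr
    intro x hx
    rw [Set.uIcc_of_le hL.le] at hx
    have hx0 : 0 ≤ x := hx.1
    have hz : (0:ℝ) < 1 + x := by linarith
    simp only [gigPdfNeg5Half, gigE, normalPdf]
    rw [show x + 1 = 1 + x from add_comm x 1]
    have hexp : Real.exp (-(x - c * M * (1 + x)) ^ 2
          / (2 * (c ^ 2 * D ^ 2 * (1 + x) / (u + c * v))))
        = Real.exp (-2 * lam / mu)
          * Real.exp (-(lam * ((1 + x) - mu) ^ 2) / (2 * mu ^ 2 * (1 + x))) := by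
      rw [← Real.exp_add]
      congr 1
      rw [hlamdef, hmudef]
      field_simp
      ring
    rw [hexp]
    have hs : Real.sqrt (2 * Real.pi * (c ^ 2 * D ^ 2 * (1 + x) / (u + c * v)))
        = Real.sqrt (2 * Real.pi) * Real.sqrt (1 + x) / Real.sqrt lam := by
      rw [show 2 * Real.pi * (c ^ 2 * D ^ 2 * (1 + x) / (u + c * v))
          = (2 * Real.pi * (1 + x)) / lam by rw [hlamdef]; field_simp,
        Real.sqrt_div (by positivity), Real.sqrt_mul (by positivity)]
    rw [hs, rpow_neg_seven_half _ hz, rpow_five_half _ hlam]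
    have h2pi : (0:ℝ) < Real.sqrt (2 * Real.pi) := Real.sqrt_pos.mpr (by positivity)
    have hsz : (0:ℝ) < Real.sqrt (1 + x) := Real.sqrt_pos.mpr hz
    have hsl : (0:ℝ) < Real.sqrt lam := Real.sqrt_pos.mpr hlam
    have hA : (0:ℝ) < lam ^ 2 + 3 * lam * mu + 3 * mu ^ 2 := by positivity
    field_simp
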